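/- Duality of generalized rank weights: Let C be an [n,k] non-degenerate linear rank metric code over F_{q^m} with non-degenerate dual C^⊥ of dimension n−k. Then {d_1(C),...,d_k(C)} ∪ {n+1−d_1(C^⊥),...,n+1−d_{n−k}(C^⊥)} = {1,2,...,n}. -/

import Mathlib

open Matrix

/-- The `r`-th generalized rank weight (minimum q-support dimension of `r`-dim subcodes). -/
noncomputable def genRankWeight (Fq : Type*) {Fqm : Type*} [Field Fq] [Field Fqm]
    [Algebra Fq Fqm] {n : ℕ} (C : Submodule Fqm (Fin n → Fqm)) (r : ℕ) : ℕ :=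
  sInf { w | ∃ b : Fin r → Fin n → Fqm, LinearIndependent Fqm b ∧
    Submodule.span Fqm (Set.range b) ≤ C ∧
    w = Module.finrank Fq
      (Submodule.span Fq (Set.range fun j : Fin n => fun i : Fin r => b i j)) }

/-- Non-degenerate: the columns of a generator matrix are `F_q`-linearly independent;
equivalently, no nonzero `F_q`-linear combination of coordinates vanishes on all of `C`. -/
def Nondeg (Fq : Type*) {Fqm : Type*} [Field Fq] [Field Fqm] [Algebra Fq Fqm] {n : ℕ}
    (C : Submodule Fqm (Fin n → Fqm)) : Prop :=
  ∀ c : Fin n → Fq, (∀ x ∈ C, ∑ j, algebraMap Fq Fqm (c j) * x j = 0) → c = 0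




open Module Submodule Set

namespace WeiAux

variable {K : Type*} [Field K] {n : ℕ}

/-- The dot pairing as a linear map into the dual. -/
noncomputable def dotL (K : Type*) [Field K] (n : ℕ) :
    (Fin n → K) →ₗ[K] Module.Dual K (Fin n → K) where
  toFun y := ∑ i, y i • LinearMap.proj i
  map_add' y z := by simp [add_smul, Finset.sum_add_distrib]
  map_smul' c y := by simp [smul_smul, Finset.smul_sum]

lemma dotL_apply (y x : Fin n → K) : dotL K n y x = ∑ i, y i * x i := by
  simp [dotL, smul_eq_mul]

lemma dotL_inj : Function.Injective (dotL K n) := by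
  intro y z h
  funext j
  have := congrArg (fun f => f (Pi.single j 1)) h
  simpa [dotL_apply, Pi.single_apply, mul_ite, Finset.sum_ite_eq] using this

lemma dotL_bij : Function.Bijective (dotL K n) := by
  refine ⟨dotL_inj, ?_⟩
  rw [← LinearMap.range_eq_top]
  apply Submodule.eq_top_of_finrank_eq
  rw [LinearMap.finrank_range_of_inj dotL_inj, Subspace.dual_finrank_eq]

/-- Orthogonal complement w.r.t. the dot pairing. -/
noncomputable def orth (W : Submodule K (Fin n → K)) : Submodule K (Fin n → K) :=
  W.dualAnnihilator.comap (dotL K n)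

lemma mem_orth {W : Submodule K (Fin n → K)} {y : Fin n → K} :
    y ∈ orth W ↔ ∀ x ∈ W, ∑ i, x i * y i = 0 := by
  simp only [orth, Submodule.mem_comap, Submodule.mem_dualAnnihilator, dotL_apply]
  constructor
  · intro h x hx
    simpa [mul_comm] using h x hx
  · intro h x hx
    simpa [mul_comm] using h x hx

lemma mem_orth_span {S : Set (Fin n → K)} {y : Fin n → K} :
    y ∈ orth (span K S) ↔ ∀ x ∈ S, ∑ i, x i * y i = 0 := by
  have hker : ∀ x : Fin n → K, (∑ i, x i * y i = 0) ↔ x ∈ LinearMap.ker (dotL K n y) := by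
    intro x
    simp only [LinearMap.mem_ker, dotL_apply]
    constructor
    · intro h; simpa [mul_comm] using h
    · intro h; simpa [mul_comm] using h
  rw [mem_orth]
  simp only [hker]
  exact ⟨fun h x hx => h x (subset_span hx), fun h x hx => span_le.mpr h hx⟩

lemma finrank_orth (W : Submodule K (Fin n → K)) :
    finrank K (orth W) + finrank K W = n := by
  have h1 : finrank K (orth W) = finrank K W.dualAnnihilator := by
    have e := LinearEquiv.ofSubmodule' (LinearEquiv.ofBijective _ dotL_bij) W.dualAnnihilator
    exact LinearEquiv.finrank_eq e
  have h2 : finrank K W.dualAnnihilator = finrank K ((Fin n → K) ⧸ W) :=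
    (LinearEquiv.finrank_eq (Subspace.quotEquivAnnihilator W)).symm
  have h3 := Submodule.finrank_quotient_add_finrank W
  rw [h1, h2, h3]
  simp

lemma le_orth_orth (W : Submodule K (Fin n → K)) : W ≤ orth (orth W) := by
  intro x hx
  rw [mem_orth]
  intro y hy
  rw [mem_orth] at hy
  simpa [mul_comm] using hy x hx

lemma orth_orth (W : Submodule K (Fin n → K)) : orth (orth W) = W := by
  have h1 := finrank_orth W
  have h2 := finrank_orth (orth W)
  exact (Submodule.eq_of_le_of_finrank_le (le_orth_orth W) (by omega)).symm

lemma orth_inf_orth (C W : Submodule K (Fin n → K)) :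
    orth C ⊓ orth W = orth (C ⊔ W) := by
  ext y
  simp only [Submodule.mem_inf, mem_orth]
  constructor
  · rintro ⟨h1, h2⟩ x hx
    rcases Submodule.mem_sup.mp hx with ⟨c, hc, w, hw, rfl⟩
    simp only [Pi.add_apply, add_mul, Finset.sum_add_distrib, h1 c hc, h2 w hw, add_zero]
  · intro h
    exact ⟨fun x hx => h x (le_sup_left (a := C) (b := W) hx),
      fun x hx => h x (le_sup_right (a := C) (b := W) hx)⟩

lemma finrank_inf_formula (C W : Submodule K (Fin n → K)) :
    finrank K ↥(C ⊓ W) + n = finrank K C + finrank K W + finrank K ↥(orth C ⊓ orth W) := by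
  rw [orth_inf_orth]
  have h1 := finrank_orth (C ⊔ W)
  have h2 := Submodule.finrank_sup_add_finrank_inf_eq C W
  omega

end WeiAux

namespace WeiAux

variable (Fq : Type*) {Fqm : Type*} [Field Fq] [Field Fqm] [Algebra Fq Fqm] {n : ℕ}

/-- Coordinatewise algebra map. -/
noncomputable def phiL : (Fin n → Fq) →ₗ[Fq] (Fin n → Fqm) :=
  (Algebra.linearMap Fq Fqm).compLeft (Fin n)

lemma phiL_apply (x : Fin n → Fq) (j : Fin n) :
    phiL Fq (Fqm := Fqm) x j = algebraMap Fq Fqm (x j) := rfl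

/-- Scalar extension of a subspace of `Fq^n` to a subspace of `Fqm^n`. -/
noncomputable def extS (V : Submodule Fq (Fin n → Fq)) : Submodule Fqm (Fin n → Fqm) :=
  span Fqm ((phiL Fq (Fqm := Fqm)) '' (V : Set (Fin n → Fq)))

variable {Fq}

lemma li_phi {t : ℕ} {v : Fin t → Fin n → Fq} (hv : LinearIndependent Fq v) :
    LinearIndependent Fqm (fun i => phiL Fq (Fqm := Fqm) (v i)) := by
  classical
  set p := span Fq (Set.range v) with hp
  obtain ⟨q, hq⟩ := Submodule.exists_isCompl p
  let B : Basis (Fin t) Fq p := Basis.span hv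
  let pr : (Fin n → Fq) →ₗ[Fq] p := Submodule.linearProjOfIsCompl p q hq
  let g : Fin t → ((Fin n → Fq) →ₗ[Fq] Fq) := fun s => (B.coord s).comp pr
  have hg : ∀ s i, g s (v i) = if i = s then 1 else 0 := by
    intro s i
    have hv_mem : v i ∈ p := subset_span (Set.mem_range_self i)
    have hpr : pr (v i) = ⟨v i, hv_mem⟩ :=
      Submodule.linearProjOfIsCompl_apply_left hq ⟨v i, hv_mem⟩
    have hBi : (⟨v i, hv_mem⟩ : p) = B i := (Basis.span_apply hv i).symm
    simp [g, LinearMap.comp_apply, hpr, hBi, Basis.coord_apply, Basis.repr_self,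
      Finsupp.single_apply]
  rw [Fintype.linearIndependent_iff]
  intro lam hlam s
  let Gm : (Fin n → Fqm) →ₗ[Fqm] Fqm :=
    ∑ j, (algebraMap Fq Fqm (g s (Pi.single j 1))) • LinearMap.proj j
  have hGm : ∀ x : Fin n → Fqm, Gm x = ∑ j, algebraMap Fq Fqm (g s (Pi.single j 1)) * x j := by
    intro x
    simp only [Gm, LinearMap.sum_apply, LinearMap.smul_apply, LinearMap.proj_apply,
      smul_eq_mul]
  have hGm_phi : ∀ y : Fin n → Fq, Gm (phiL Fq y) = algebraMap Fq Fqm (g s y) := by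
    intro y
    rw [hGm]
    have hy : g s y = ∑ j, y j * g s (Pi.single j 1) := by
      conv_lhs => rw [← Finset.univ_sum_single y]
      rw [_root_.map_sum]
      congr 1
      funext j
      have hsingle : Pi.single j (y j) = y j • (Pi.single j (1 : Fq) : Fin n → Fq) := by
        funext l
        simp [Pi.single_apply]
      rw [hsingle, _root_.map_smul, smul_eq_mul]
    rw [hy, _root_.map_sum]
    congr 1
    funext j
    rw [phiL_apply, _root_.map_mul, mul_comm]
  have h0 : Gm (∑ i, lam i • phiL Fq (v i)) = lam s := by
    rw [_root_.map_sum]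
    have hterm : ∀ i, Gm (lam i • phiL Fq (v i)) = lam i * algebraMap Fq Fqm (g s (v i)) := by
      intro i; rw [_root_.map_smul, smul_eq_mul, hGm_phi]
    simp only [hterm, hg]
    simp [Finset.sum_ite_eq]
  rw [hlam] at h0
  simpa using h0.symm

lemma extS_span {t : ℕ} {v : Fin t → Fin n → Fq} {V : Submodule Fq (Fin n → Fq)}
    (hspan : span Fq (Set.range v) = V) :
    extS Fq (Fqm := Fqm) V = span Fqm (Set.range fun i => phiL Fq (Fqm := Fqm) (v i)) := by
  apply le_antisymm
  · rw [extS, span_le]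
    rintro _ ⟨y, hy, rfl⟩
    rw [← hspan] at hy
    rcases (mem_span_range_iff_exists_fun Fq).mp hy with ⟨c, hc⟩
    rw [← hc, _root_.map_sum]
    refine sum_mem fun i _ => ?_
    have hsm : (phiL Fq (Fqm := Fqm)) (c i • v i)
        = algebraMap Fq Fqm (c i) • phiL Fq (Fqm := Fqm) (v i) := by
      rw [_root_.map_smul, algebraMap_smul]
    rw [hsm]
    exact smul_mem _ _ (subset_span (Set.mem_range_self i))
  · rw [span_le]
    rintro _ ⟨i, rfl⟩
    exact subset_span ⟨v i, hspan ▸ subset_span (Set.mem_range_self i), rfl⟩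

lemma exists_basis_family (V : Submodule Fq (Fin n → Fq)) :
    ∃ v : Fin (finrank Fq V) → Fin n → Fq,
      LinearIndependent Fq v ∧ span Fq (Set.range v) = V := by
  let b := Module.finBasis Fq V
  refine ⟨fun i => (b i : Fin n → Fq),
    b.linearIndependent.map' V.subtype (Submodule.ker_subtype V), ?_⟩
  have hr : (Set.range fun i => (b i : Fin n → Fq)) = V.subtype '' Set.range b := by
    rw [← Set.range_comp]; rfl
  rw [hr, Submodule.span_image, b.span_eq, Submodule.map_top, Submodule.range_subtype]

set_option maxHeartbeats 1000000 in
lemma finrank_extS (V : Submodule Fq (Fin n → Fq)) :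
    finrank Fqm (extS Fq (Fqm := Fqm) V) = finrank Fq V := by
  obtain ⟨v, hv, hspan⟩ := exists_basis_family V
  rw [extS_span hspan]
  have hcard := finrank_span_eq_card (R := Fqm) (li_phi (Fqm := Fqm) hv)
  rw [hcard, Fintype.card_fin]

lemma extS_mono {V V' : Submodule Fq (Fin n → Fq)} (h : V ≤ V') :
    extS Fq (Fqm := Fqm) V ≤ extS Fq V' :=
  span_mono (Set.image_mono h)

lemma extS_bot : extS Fq (Fqm := Fqm) (⊥ : Submodule Fq (Fin n → Fq)) = ⊥ := by
  rw [extS]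
  simp

lemma phiL_single (j : Fin n) :
    phiL Fq (Fqm := Fqm) (Pi.single j 1) = Pi.single j (1 : Fqm) := by
  funext i
  rw [phiL_apply]
  rcases eq_or_ne i j with rfl | h
  · simp
  · simp [Pi.single_eq_of_ne h]

lemma extS_top : extS Fq (Fqm := Fqm) (⊤ : Submodule Fq (Fin n → Fq)) = ⊤ := by
  rw [eq_top_iff]
  intro x _
  have hx : x = ∑ j, x j • phiL Fq (Fqm := Fqm) (Pi.single j 1) := by
    conv_lhs => rw [← Finset.univ_sum_single x]
    congr 1
    funext j
    rw [phiL_single]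
    funext l
    simp [Pi.single_apply]
  rw [hx]
  exact sum_mem fun j _ => smul_mem _ _ (subset_span ⟨Pi.single j 1, trivial, rfl⟩)

lemma extS_orth (V : Submodule Fq (Fin n → Fq)) :
    extS Fq (Fqm := Fqm) (orth V) = orth (extS Fq (Fqm := Fqm) V) := by
  have hle : extS Fq (Fqm := Fqm) (orth V) ≤ orth (extS Fq (Fqm := Fqm) V) := by
    rw [extS, span_le]
    rintro _ ⟨y, hy, rfl⟩
    rw [SetLike.mem_coe, extS, mem_orth_span]
    rintro _ ⟨w, hw, rfl⟩
    have h0 : ∑ i, w i * y i = 0 := (mem_orth.mp hy) w hw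
    calc ∑ i, phiL Fq (Fqm := Fqm) w i * phiL Fq y i
        = algebraMap Fq Fqm (∑ i, w i * y i) := by
          rw [_root_.map_sum]; exact Finset.sum_congr rfl fun i _ => by
            rw [phiL_apply, phiL_apply, _root_.map_mul]
      _ = 0 := by rw [h0, _root_.map_zero]
  have h1 := finrank_orth (K := Fqm) (extS Fq (Fqm := Fqm) V)
  have h2 := finrank_orth (K := Fq) V
  have h3 := finrank_extS (Fqm := Fqm) V
  have h4 := finrank_extS (Fqm := Fqm) (orth V)
  exact Submodule.eq_of_le_of_finrank_le hle (by omega)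

end WeiAux

namespace WeiAux

variable (Fq : Type*) {Fqm : Type*} [Field Fq] [Field Fqm] [Algebra Fq Fqm] {n : ℕ}

/-- Set of dimensions of intersections of `C` with extended subspaces of dimension `≤ w`. -/
def NSet (C : Submodule Fqm (Fin n → Fqm)) (w : ℕ) : Set ℕ :=
  {d | ∃ V : Submodule Fq (Fin n → Fq), finrank Fq V ≤ w ∧
    d = finrank Fqm ↥(C ⊓ extS Fq V)}

/-- Maximal dimension of the intersection of `C` with an extended subspace of dim `≤ w`. -/
noncomputable def NN (C : Submodule Fqm (Fin n → Fqm)) (w : ℕ) : ℕ :=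
  sSup (NSet Fq C w)

variable {Fq}
variable {C Cd : Submodule Fqm (Fin n → Fqm)}

lemma NSet_nonempty (C : Submodule Fqm (Fin n → Fqm)) (w : ℕ) : (NSet Fq C w).Nonempty :=
  ⟨_, ⊥, by simp, rfl⟩

lemma NSet_bdd (C : Submodule Fqm (Fin n → Fqm)) (w : ℕ) : BddAbove (NSet Fq C w) := by
  refine ⟨finrank Fqm C, ?_⟩
  rintro d ⟨V, hV, rfl⟩
  exact Submodule.finrank_mono inf_le_left

lemma NN_le_finrank (C : Submodule Fqm (Fin n → Fqm)) (w : ℕ) :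
    NN Fq C w ≤ finrank Fqm C :=
  csSup_le (NSet_nonempty C w) (by rintro d ⟨V, hV, rfl⟩; exact Submodule.finrank_mono inf_le_left)

lemma NN_mono {w w' : ℕ} (h : w ≤ w') : NN Fq C w ≤ NN Fq C w' :=
  csSup_le_csSup (NSet_bdd C w') (NSet_nonempty C w)
    (by rintro d ⟨V, hV, rfl⟩; exact ⟨V, hV.trans h, rfl⟩)

lemma NN_zero : NN Fq C 0 = 0 := by
  refine le_antisymm (csSup_le (NSet_nonempty C 0) ?_) (Nat.zero_le _)
  rintro d ⟨V, hV, rfl⟩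
  have hVbot : V = ⊥ := Submodule.finrank_eq_zero.mp (Nat.le_antisymm hV (Nat.zero_le _))
  rw [hVbot, extS_bot, inf_bot_eq, finrank_bot]

lemma inf_step {A B : Submodule Fqm (Fin n → Fqm)} (hAB : A ≤ B) :
    finrank Fqm ↥(C ⊓ B) + finrank Fqm A ≤ finrank Fqm ↥(C ⊓ A) + finrank Fqm B := by
  have h1 := Submodule.finrank_sup_add_finrank_inf_eq (C ⊓ B) A
  have h2 : (C ⊓ B) ⊓ A = C ⊓ A := by
    rw [inf_assoc, inf_eq_right.mpr hAB]
  rw [h2] at h1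
  have h3 : (C ⊓ B) ⊔ A ≤ B := sup_le inf_le_right hAB
  have h4 := Submodule.finrank_mono h3
  omega

lemma exists_codim_one (V : Submodule Fq (Fin n → Fq)) {w : ℕ} (h : finrank Fq V = w + 1) :
    ∃ V' ≤ V, finrank Fq V' = w := by
  obtain ⟨v, hv, hspan⟩ := exists_basis_family V
  let f : Fin w → Fin (finrank Fq V) := fun i => Fin.cast h.symm i.castSucc
  have hf : Function.Injective f := by
    intro a b hab
    have := Fin.cast_injective h.symm hab
    exact Fin.castSucc_injective _ this
  have hli : LinearIndependent Fq (v ∘ f) := hv.comp f hf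
  refine ⟨span Fq (Set.range (v ∘ f)), ?_, ?_⟩
  · rw [span_le]
    rintro _ ⟨i, rfl⟩
    have hmm : v (f i) ∈ span Fq (Set.range v) := subset_span ⟨f i, rfl⟩
    rwa [hspan] at hmm
  · rw [finrank_span_eq_card hli, Fintype.card_fin]

lemma NN_step (C : Submodule Fqm (Fin n → Fqm)) (w : ℕ) :
    NN Fq C (w + 1) ≤ NN Fq C w + 1 := by
  refine csSup_le (NSet_nonempty C (w + 1)) ?_
  rintro d ⟨V, hV, rfl⟩
  by_cases hc : finrank Fq V ≤ w
  · exact (le_csSup (NSet_bdd C w) ⟨V, hc, rfl⟩).trans (Nat.le_succ _)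
  · have hV1 : finrank Fq V = w + 1 := Nat.le_antisymm hV (not_le.mp hc)
    obtain ⟨V', hV'le, hV'⟩ := exists_codim_one V hV1
    have hstep := inf_step (C := C) (extS_mono (Fqm := Fqm) hV'le)
    rw [finrank_extS, finrank_extS, hV', hV1] at hstep
    have hmem : finrank Fqm ↥(C ⊓ extS Fq V') ≤ NN Fq C w :=
      le_csSup (NSet_bdd C w) ⟨V', hV'.le, rfl⟩
    omega

lemma exists_extend {V : Submodule Fq (Fin n → Fq)} {w : ℕ}
    (h1 : finrank Fq V ≤ w) (h2 : w ≤ n) : ∃ V', V ≤ V' ∧ finrank Fq V' = w := by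
  induction w with
  | zero => exact ⟨V, le_rfl, Nat.le_antisymm h1 (Nat.zero_le _)⟩
  | succ w ih =>
    rcases Nat.lt_or_ge (finrank Fq V) (w + 1) with hlt | hge
    · obtain ⟨V', hle, hfr⟩ := ih (Nat.lt_succ_iff.mp hlt) (Nat.le_of_succ_le h2)
      have hne : V' ≠ ⊤ := by
        intro ht
        rw [ht, finrank_top] at hfr
        simp only [Module.finrank_fin_fun] at hfr
        omega
      obtain ⟨x, _, hxV'⟩ := SetLike.exists_of_lt (show V' < ⊤ from lt_top_iff_ne_top.mpr hne)
      refine ⟨V' ⊔ span Fq {x}, hle.trans le_sup_left, ?_⟩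
      have hx0 : x ≠ 0 := fun h => hxV' (h ▸ zero_mem _)
      have hdisj : V' ⊓ span Fq {x} = ⊥ := by
        rw [eq_bot_iff]
        rintro y hy
        rcases Submodule.mem_inf.mp hy with ⟨hy1, hy2⟩
        rcases Submodule.mem_span_singleton.mp hy2 with ⟨c, rfl⟩
        rcases eq_or_ne c 0 with rfl | hc
        · simp
        · exfalso
          apply hxV'
          have : c⁻¹ • (c • x) ∈ V' := Submodule.smul_mem _ _ hy1
          rwa [smul_smul, inv_mul_cancel₀ hc, one_smul] at this
      have hsum := Submodule.finrank_sup_add_finrank_inf_eq V' (span Fq {x})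
      rw [hdisj, finrank_bot, finrank_span_singleton hx0] at hsum
      omega
    · exact ⟨V, le_rfl, Nat.le_antisymm h1 hge⟩

lemma pointwise_dual (hCd : Cd = orth C) (V : Submodule Fq (Fin n → Fq)) :
    finrank Fqm ↥(C ⊓ extS Fq V) + n =
      finrank Fqm C + finrank Fq V + finrank Fqm ↥(Cd ⊓ extS Fq (orth V)) := by
  have h := finrank_inf_formula C (extS Fq (Fqm := Fqm) V)
  rw [← extS_orth, ← hCd] at h
  rw [h, finrank_extS]

lemma NN_dual (hCd : Cd = orth C) {w : ℕ} (hw : w ≤ n) :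
    NN Fq C w + n = finrank Fqm C + w + NN Fq Cd (n - w) := by
  apply le_antisymm
  · have hmem : NN Fq C w ∈ NSet Fq C w := Nat.sSup_mem (NSet_nonempty C w) (NSet_bdd C w)
    obtain ⟨V0, hV0, heq⟩ := hmem
    obtain ⟨V, hV0V, hVw⟩ := exists_extend hV0 hw
    have hmono : finrank Fqm ↥(C ⊓ extS Fq V0) ≤ finrank Fqm ↥(C ⊓ extS Fq V) :=
      Submodule.finrank_mono (inf_le_inf_left _ (extS_mono hV0V))
    have hpd := pointwise_dual hCd V
    have horth := finrank_orth (K := Fq) V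
    have hWmem : finrank Fqm ↥(Cd ⊓ extS Fq (orth V)) ∈ NSet Fq Cd (n - w) :=
      ⟨orth V, by omega, rfl⟩
    have hsup : finrank Fqm ↥(Cd ⊓ extS Fq (orth V)) ≤ NN Fq Cd (n - w) :=
      le_csSup (NSet_bdd Cd (n - w)) hWmem
    omega
  · have hmem : NN Fq Cd (n - w) ∈ NSet Fq Cd (n - w) :=
      Nat.sSup_mem (NSet_nonempty Cd (n - w)) (NSet_bdd Cd (n - w))
    obtain ⟨U0, hU0, heq⟩ := hmem
    obtain ⟨U, hU0U, hUw⟩ := exists_extend hU0 (Nat.sub_le n w)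
    have hmono : finrank Fqm ↥(Cd ⊓ extS Fq U0) ≤ finrank Fqm ↥(Cd ⊓ extS Fq U) :=
      Submodule.finrank_mono (inf_le_inf_left _ (extS_mono hU0U))
    have hpd := pointwise_dual hCd (orth U)
    rw [orth_orth] at hpd
    have horth := finrank_orth (K := Fq) U
    have hVmem : finrank Fqm ↥(C ⊓ extS Fq (orth U)) ∈ NSet Fq C w :=
      ⟨orth U, by omega, rfl⟩
    have hsup : finrank Fqm ↥(C ⊓ extS Fq (orth U)) ≤ NN Fq C w :=
      le_csSup (NSet_bdd C w) hVmem
    omega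

end WeiAux

namespace WeiAux

variable {Fq : Type*} {Fqm : Type*} [Field Fq] [Field Fqm] [Algebra Fq Fqm] {n : ℕ}
variable {C : Submodule Fqm (Fin n → Fqm)}

lemma CL1 {r : ℕ} (b : Fin r → Fin n → Fqm) (V : Submodule Fq (Fin n → Fq))
    (hb : ∀ i, b i ∈ extS Fq (Fqm := Fqm) V) :
    finrank Fq ↥(span Fq (Set.range fun j : Fin n => fun i : Fin r => b i j)) ≤
      finrank Fq V := by
  classical
  obtain ⟨v, hv, hspan⟩ := exists_basis_family V
  have hbi : ∀ i, ∃ lam : Fin (finrank Fq V) → Fqm,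
      b i = ∑ s, lam s • phiL Fq (Fqm := Fqm) (v s) := by
    intro i
    have hmem := hb i
    rw [extS_span hspan] at hmem
    rcases (mem_span_range_iff_exists_fun Fqm).mp hmem with ⟨c, hc⟩
    exact ⟨c, hc.symm⟩
  choose lam hlam using hbi
  let L : Fin (finrank Fq V) → (Fin r → Fqm) := fun s => fun i => lam i s
  have hcol : ∀ j : Fin n, (fun i : Fin r => b i j) ∈ span Fq (Set.range L) := by
    intro j
    have hc : (fun i : Fin r => b i j) = ∑ s, v s j • L s := by
      funext i
      have l2 : (∑ s, v s j • L s) i = ∑ s, algebraMap Fq Fqm (v s j) * lam i s := by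
        simp only [Finset.sum_apply, Pi.smul_apply, L]
        simp only [Algebra.smul_def]
      have l1 : b i j = ∑ s, lam i s * algebraMap Fq Fqm (v s j) := by
        rw [hlam i]
        simp only [Finset.sum_apply, Pi.smul_apply, phiL_apply, smul_eq_mul]
      rw [l1, l2]
      exact Finset.sum_congr rfl fun s _ => mul_comm _ _
    rw [hc]
    exact sum_mem fun s _ => smul_mem _ _ (subset_span (Set.mem_range_self s))
  have hle : span Fq (Set.range fun j : Fin n => fun i : Fin r => b i j) ≤
      span Fq (Set.range L) := span_le.mpr (by rintro _ ⟨j, rfl⟩; exact hcol j)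
  haveI := FiniteDimensional.span_of_finite Fq (Set.finite_range L)
  refine (Submodule.finrank_mono hle).trans ?_
  have := finrank_range_le_card (R := Fq) L
  simpa [Set.finrank] using this

lemma CL2 {r : ℕ} (b : Fin r → Fin n → Fqm) :
    ∃ V : Submodule Fq (Fin n → Fq),
      finrank Fq V ≤ finrank Fq ↥(span Fq (Set.range fun j : Fin n => fun i : Fin r => b i j)) ∧
      ∀ i, b i ∈ extS Fq (Fqm := Fqm) V := by
  classical
  set col : Fin n → (Fin r → Fqm) := fun j => fun i => b i j with hcoldef
  haveI := FiniteDimensional.span_of_finite Fq (Set.finite_range col)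
  set W := span Fq (Set.range col) with hWdef
  set w := finrank Fq W with hw
  let u : Basis (Fin w) Fq W := Module.finBasis Fq W
  have hmem : ∀ j, col j ∈ W := fun j => subset_span (Set.mem_range_self j)
  let a : Fin n → Fin w → Fq := fun j => fun s => (u.repr ⟨col j, hmem j⟩) s
  let v : Fin w → Fin n → Fq := fun s => fun j => a j s
  refine ⟨span Fq (Set.range v), ?_, ?_⟩
  · have := finrank_range_le_card (R := Fq) v
    simpa [Set.finrank] using this
  · intro i
    have hbi : b i = ∑ s, ((u s : Fin r → Fqm) i) • phiL Fq (Fqm := Fqm) (v s) := by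
      funext j
      have hrepr : (col j : Fin r → Fqm) = ∑ s, a j s • (u s : Fin r → Fqm) := by
        have hsr := congrArg (fun z : W => (z : Fin r → Fqm)) (u.sum_repr ⟨col j, hmem j⟩).symm
        simpa only [Submodule.coe_sum, Submodule.coe_smul] using hsr
      have h1 : b i j = (col j) i := rfl
      have h2 : (col j) i = ∑ s, algebraMap Fq Fqm (a j s) * (u s : Fin r → Fqm) i := by
        rw [hrepr]
        simp only [Finset.sum_apply, Pi.smul_apply]
        simp only [Algebra.smul_def]
      have h3 : (∑ s, ((u s : Fin r → Fqm) i) • phiL Fq (Fqm := Fqm) (v s)) j =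
          ∑ s, (u s : Fin r → Fqm) i * algebraMap Fq Fqm (a j s) := by
        simp only [Finset.sum_apply, Pi.smul_apply, phiL_apply, smul_eq_mul, v]
      rw [h1, h2, h3]
      exact Finset.sum_congr rfl fun s _ => mul_comm _ _
    rw [hbi]
    exact sum_mem fun s _ => smul_mem _ _
      (subset_span ⟨v s, subset_span (Set.mem_range_self s), rfl⟩)

end WeiAux

namespace WeiAux

variable (Fq : Type*) {Fqm : Type*} [Field Fq] [Field Fqm] [Algebra Fq Fqm] {n : ℕ}

/-- The defining set of `genRankWeight`. -/
def gwSet (C : Submodule Fqm (Fin n → Fqm)) (r : ℕ) :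
    Set ℕ :=
  { w | ∃ b : Fin r → Fin n → Fqm, LinearIndependent Fqm b ∧
    Submodule.span Fqm (Set.range b) ≤ C ∧
    w = Module.finrank Fq
      (Submodule.span Fq (Set.range fun j : Fin n => fun i : Fin r => b i j)) }

variable {Fq}
variable {C : Submodule Fqm (Fin n → Fqm)}

lemma gw_eq_sInf (r : ℕ) : genRankWeight Fq C r = sInf (gwSet Fq C r) := rfl

lemma gwSet_nonempty {r : ℕ} (hr : r ≤ finrank Fqm C) : (gwSet Fq C r).Nonempty := by
  obtain ⟨f, hf⟩ := exists_linearIndependent_of_le_finrank (R := Fqm) (M := C) hr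
  refine ⟨_, fun i => (f i : Fin n → Fqm), hf.map' C.subtype (Submodule.ker_subtype C), ?_, rfl⟩
  rw [span_le]
  rintro _ ⟨i, rfl⟩
  exact (f i).2

lemma gwSet_mem_le_n {w : ℕ} (hw : w ∈ gwSet Fq C r) : w ≤ n := by
  obtain ⟨b, _, _, rfl⟩ := hw
  haveI := FiniteDimensional.span_of_finite Fq
    (Set.finite_range fun j : Fin n => fun i : Fin r => b i j)
  have h := finrank_range_le_card (R := Fq) (fun j : Fin n => fun i : Fin r => b i j)
  simpa [Set.finrank] using h

lemma gw_le_n {r : ℕ} (hr : r ≤ finrank Fqm C) : genRankWeight Fq C r ≤ n := by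
  obtain ⟨w, hw⟩ := gwSet_nonempty (Fq := Fq) hr
  exact (Nat.sInf_le hw).trans (gwSet_mem_le_n hw)

lemma gw_le {r : ℕ} (V : Submodule Fq (Fin n → Fq))
    (hV : r ≤ finrank Fqm ↥(C ⊓ extS Fq V)) :
    genRankWeight Fq C r ≤ finrank Fq V := by
  obtain ⟨f, hf⟩ := exists_linearIndependent_of_le_finrank
    (R := Fqm) (M := ↥(C ⊓ extS Fq V)) hV
  set b : Fin r → Fin n → Fqm := fun i => (f i : Fin n → Fqm) with hb
  have hli : LinearIndependent Fqm b :=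
    hf.map' (C ⊓ extS Fq V).subtype (Submodule.ker_subtype _)
  have hsub : span Fqm (Set.range b) ≤ C ⊓ extS Fq V := by
    rw [span_le]; rintro _ ⟨i, rfl⟩; exact (f i).2
  have hmem : finrank Fq ↥(span Fq (Set.range fun j : Fin n => fun i : Fin r => b i j)) ∈
      gwSet Fq C r := ⟨b, hli, hsub.trans inf_le_left, rfl⟩
  refine (Nat.sInf_le hmem).trans (CL1 b V fun i => ?_)
  exact (hsub (subset_span (Set.mem_range_self i))).2

lemma gw_witness {r : ℕ} (hr : r ≤ finrank Fqm C) :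
    ∃ V : Submodule Fq (Fin n → Fq), finrank Fq V ≤ genRankWeight Fq C r ∧
      r ≤ finrank Fqm ↥(C ⊓ extS Fq V) := by
  have hmem : genRankWeight Fq C r ∈ gwSet Fq C r := Nat.sInf_mem (gwSet_nonempty hr)
  obtain ⟨b, hli, hsub, heq⟩ := hmem
  obtain ⟨V, hV1, hV2⟩ := CL2 (Fq := Fq) b
  refine ⟨V, by rw [heq]; exact hV1, ?_⟩
  have hsub2 : span Fqm (Set.range b) ≤ C ⊓ extS Fq V := by
    refine le_inf hsub ?_
    rw [span_le]; rintro _ ⟨i, rfl⟩; exact hV2 i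
  have hfr : finrank Fqm ↥(span Fqm (Set.range b)) = r := by
    rw [finrank_span_eq_card hli, Fintype.card_fin]
  rw [← hfr]
  exact Submodule.finrank_mono hsub2

lemma A1 {r : ℕ} (hr1 : 1 ≤ r) (hr : r ≤ finrank Fqm C) :
    1 ≤ genRankWeight Fq C r ∧ genRankWeight Fq C r ≤ n ∧
      NN Fq C (genRankWeight Fq C r - 1) < NN Fq C (genRankWeight Fq C r) := by
  set w := genRankWeight Fq C r with hwdef
  obtain ⟨V, hV1, hV2⟩ := gw_witness (Fq := Fq) hr
  have hrNw : r ≤ NN Fq C w := hV2.trans (le_csSup (NSet_bdd C w) ⟨V, hV1, rfl⟩)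
  have hw1 : 1 ≤ w := by
    by_contra hcon
    have hw0 : w = 0 := by omega
    rw [hw0, NN_zero] at hrNw
    omega
  refine ⟨hw1, gw_le_n hr, ?_⟩
  have hlt : NN Fq C (w - 1) < r := by
    by_contra hge
    push_neg at hge
    have hmem : NN Fq C (w - 1) ∈ NSet Fq C (w - 1) :=
      Nat.sSup_mem (NSet_nonempty C (w - 1)) (NSet_bdd C (w - 1))
    obtain ⟨V', hV'w, heq'⟩ := hmem
    have hge' : r ≤ finrank Fqm ↥(C ⊓ extS Fq V') := by omega
    have := gw_le V' hge'
    omega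
  omega

lemma A2 {w : ℕ} (hw1 : 1 ≤ w) (hjump : NN Fq C (w - 1) < NN Fq C w) :
    ∃ r, 1 ≤ r ∧ r ≤ finrank Fqm C ∧ genRankWeight Fq C r = w := by
  set r := NN Fq C w with hrdef
  have hr1 : 1 ≤ r := by omega
  have hrk : r ≤ finrank Fqm C := NN_le_finrank C w
  refine ⟨r, hr1, hrk, ?_⟩
  have hle : genRankWeight Fq C r ≤ w := by
    have hmem : NN Fq C w ∈ NSet Fq C w := Nat.sSup_mem (NSet_nonempty C w) (NSet_bdd C w)
    obtain ⟨V, hVw, heq⟩ := hmem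
    have : r ≤ finrank Fqm ↥(C ⊓ extS Fq V) := le_of_eq heq
    exact (gw_le V this).trans hVw
  have hgt : ¬ genRankWeight Fq C r ≤ w - 1 := by
    intro hcon
    obtain ⟨V, hV1, hV2⟩ := gw_witness (Fq := Fq) hrk
    have : r ≤ NN Fq C (w - 1) :=
      hV2.trans (le_csSup (NSet_bdd C (w - 1)) ⟨V, by omega, rfl⟩)
    omega
  omega

end WeiAux

open WeiAux in
theorem genRankWeight_duality
    {Fq Fqm : Type*} [Field Fq] [Field Fqm] [Algebra Fq Fqm]
    {n k : ℕ} (C Cd : Submodule Fqm (Fin n → Fqm))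
    (hCk : Module.finrank Fqm C = k) (hCdk : Module.finrank Fqm Cd = n - k) (hkn : k ≤ n)
    (hdual : ∀ y, y ∈ Cd ↔ ∀ x ∈ C, ∑ i, x i * y i = 0)
    (hnd : Nondeg Fq C) (hndd : Nondeg Fq Cd) :
    { w | ∃ r : ℕ, 1 ≤ r ∧ r ≤ k ∧ w = genRankWeight Fq C r } ∪
      { w | ∃ r : ℕ, 1 ≤ r ∧ r ≤ n - k ∧ w = n + 1 - genRankWeight Fq Cd r } =
      Set.Icc 1 n := by
  classical
  have hCd : Cd = WeiAux.orth C := by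
    ext y
    rw [WeiAux.mem_orth]
    exact hdual y
  ext w
  simp only [Set.mem_union, Set.mem_setOf_eq, Set.mem_Icc]
  constructor
  · rintro (⟨r, hr1, hr2, rfl⟩ | ⟨r, hr1, hr2, rfl⟩)
    · obtain ⟨h1, h2, _⟩ := A1 (C := C) (Fq := Fq) hr1 (by rw [hCk]; exact hr2)
      exact ⟨h1, h2⟩
    · obtain ⟨h1, h2, _⟩ := A1 (C := Cd) (Fq := Fq) hr1 (by rw [hCdk]; exact hr2)
      omega
  · rintro ⟨h1, h2⟩
    by_cases hj : NN Fq C (w - 1) < NN Fq C w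
    · obtain ⟨r, hr1, hrk, hgw⟩ := A2 (C := C) h1 hj
      exact Or.inl ⟨r, hr1, by rw [← hCk]; exact hrk, hgw.symm⟩
    · have hmono := NN_mono (C := C) (Fq := Fq) (Nat.sub_le w 1)
      have heqN : NN Fq C w = NN Fq C (w - 1) := le_antisymm (not_lt.mp hj) hmono
      have hd1 := NN_dual (Fq := Fq) hCd h2
      have hd2 := NN_dual (Fq := Fq) hCd (show w - 1 ≤ n by omega)
      have e1 : n - (w - 1) = n + 1 - w := by omega
      rw [e1] at hd2
      have hjump : NN Fq Cd ((n + 1 - w) - 1) < NN Fq Cd (n + 1 - w) := by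
        have e2 : (n + 1 - w) - 1 = n - w := by omega
        rw [e2]
        omega
      obtain ⟨r, hr1, hrk, hgw⟩ := A2 (C := Cd) (by omega) hjump
      exact Or.inr ⟨r, hr1, by rw [← hCdk]; exact hrk, by omega⟩
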